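/- Let v ∈ ℝ² be nonzero and let v_⊥ ∈ ℝ² satisfy v^⊤ v_⊥ = 0 and ‖v_⊥‖ = ‖v‖. Let W be a 2×2 real matrix, let μ_t, σ' ∈ ℝ, and let ε₀, ε₁ be independent standard real Gaussians. Then E[(S(μ_t v^⊤ e + σ' v^⊤(v ε₀ + v_⊥ ε₁)) − 1) · (μ_t W e + σ' W (v ε₀ + v_⊥ ε₁))] = λ₁ · W e + λ₂ · W v, where λ₁ = μ_t · E[S(μ_t v^⊤ e + σ' ‖v‖² ε₀) − 1] and λ₂ = σ' · E[(S(μ_t v^⊤ e + σ' ‖v‖² ε₀) − 1) ε₀]. -/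

import Mathlib

open MeasureTheory ProbabilityTheory Matrix RealInnerProductSpace

/-- The logistic sigmoid `S(t) = 1/(1 + exp(-t))`. -/
noncomputable def S (t : ℝ) : ℝ := 1 / (1 + Real.exp (-t))

/-- The unit vector `e = (1/√2)(1,1)ᵀ`. -/
noncomputable def e : Fin 2 → ℝ := fun _ => 1 / Real.sqrt 2

/-- `e` as an element of Euclidean space `ℝ²`. -/
noncomputable def eE : EuclideanSpace ℝ (Fin 2) := (WithLp.equiv 2 (Fin 2 → ℝ)).symm e

/-- The standard Gaussian measure on `ℝ`. -/
noncomputable def γ : Measure ℝ := gaussianReal 0 1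

/-- The law of a pair `(ε₀, ε₁)` of independent standard Gaussians. -/
noncomputable def γ2 : Measure (ℝ × ℝ) := γ.prod γ

lemma S_bounds (t : ℝ) : 0 ≤ S t ∧ S t ≤ 1 := by
  have h : (0:ℝ) < 1 + Real.exp (-t) := by positivity
  constructor
  · unfold S; positivity
  · unfold S
    rw [div_le_one h]
    have := Real.exp_pos (-t)
    linarith

lemma S_continuous : Continuous S := by
  unfold S
  exact continuous_const.div
    (continuous_const.add (Real.continuous_exp.comp continuous_neg))
    (fun t => by positivity)

instance : IsProbabilityMeasure γ := by unfold γ; infer_instance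

lemma gamma_map_neg : Measure.map (fun x : ℝ => -x) γ = γ := by
  have h := gaussianReal_map_const_mul (μ := 0) (v := 1) (-1)
  have h1 : (⟨(-1:ℝ)^2, sq_nonneg _⟩ : NNReal) * 1 = 1 := by ext; norm_num
  have h2 : Measure.map (fun x : ℝ => -1 * x) (gaussianReal 0 1) = gaussianReal 0 1 := by
    rw [h]; congr 1
    · norm_num
  replace h := h2
  simp only [mul_zero, neg_one_mul] at h
  unfold γ
  exact h

lemma gamma_integrable_id : Integrable (fun z : ℝ => z) γ := by
  have hγ : γ = volume.withDensity (gaussianPDF 0 1) := by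
    unfold γ; exact gaussianReal_of_var_ne_zero 0 one_ne_zero
  rw [hγ, integrable_withDensity_iff (measurable_gaussianPDF 0 1)
    (ae_of_all _ fun x => ENNReal.ofReal_lt_top)]
  have heq : (fun x : ℝ => x * (gaussianPDF 0 1 x).toReal)
      = fun x => (Real.sqrt (2 * Real.pi))⁻¹ * (x * Real.exp (-(2:ℝ)⁻¹ * x ^ 2)) := by
    funext x
    rw [gaussianPDF, ENNReal.toReal_ofReal (gaussianPDFReal_nonneg _ _ _), gaussianPDFReal]
    push_cast
    ring_nf
  rw [heq]
  exact (integrable_mul_exp_neg_mul_sq (by norm_num : (0:ℝ) < 2⁻¹)).const_mul _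

lemma gamma_mean_zero : ∫ z, z ∂γ = 0 := by
  have h1 : ∫ z, z ∂γ = ∫ z, -z ∂γ := by
    nth_rewrite 1 [← gamma_map_neg]
    exact integral_map measurable_neg.aemeasurable aestronglyMeasurable_id
  rw [integral_neg] at h1
  linarith

/-- Let `v ∈ ℝ²` be nonzero and `v⊥ ∈ ℝ²` with `vᵀ v⊥ = 0` and `‖v⊥‖ = ‖v‖`.  For a 2×2
matrix `W`, reals `μₜ, σ'`, and independent standard Gaussians `ε₀, ε₁`, the expectation
`E[(S(μₜ vᵀe + σ' vᵀ(v ε₀ + v⊥ ε₁)) - 1) ⬝ (μₜ W e + σ' W (v ε₀ + v⊥ ε₁))]`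
equals `λ₁ W e + λ₂ W v`, where `λ₁ = μₜ E[S(μₜ vᵀe + σ' ‖v‖² ε₀) - 1]` and
`λ₂ = σ' E[(S(μₜ vᵀe + σ' ‖v‖² ε₀) - 1) ε₀]`. -/
theorem stmt5 (v vperp : EuclideanSpace ℝ (Fin 2)) (hv : v ≠ 0)
    (horth : ⟪v, vperp⟫ = 0) (hnorm : ‖vperp‖ = ‖v‖)
    (W : Matrix (Fin 2) (Fin 2) ℝ) (μt σ' : ℝ)
    (l₁ l₂ : ℝ)
    (hl₁ : l₁ = μt * ∫ z, (S (μt * ⟪v, eE⟫ + σ' * ‖v‖ ^ 2 * z) - 1) ∂γ)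
    (hl₂ : l₂ = σ' * ∫ z, (S (μt * ⟪v, eE⟫ + σ' * ‖v‖ ^ 2 * z) - 1) * z ∂γ) :
    ∀ i : Fin 2,
      (∫ p : ℝ × ℝ,
          (S (μt * ⟪v, eE⟫ + σ' * ⟪v, p.1 • v + p.2 • vperp⟫) - 1) *
            (μt * (W *ᵥ e) i + σ' * (W *ᵥ fun j => (p.1 • v + p.2 • vperp) j) i) ∂γ2)
        = l₁ * (W *ᵥ e) i + l₂ * (W *ᵥ fun j => v j) i := by
  intro i
  set a : ℝ := μt * ⟪v, eE⟫ with ha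
  set b : ℝ := σ' * ‖v‖ ^ 2 with hb
  set A : ℝ := (W *ᵥ e) i with hA
  set B : ℝ := (W *ᵥ fun j => v j) i with hB
  set C : ℝ := (W *ᵥ fun j => vperp j) i with hC
  -- continuity/boundedness of the sigmoid factor
  have hFcont : Continuous (fun z : ℝ => S (a + b * z) - 1) := by
    exact (S_continuous.comp (continuous_const.add (continuous_const.mul continuous_id))).sub
      continuous_const
  have hFbd : ∀ z : ℝ, ‖S (a + b * z) - 1‖ ≤ 1 := by
    intro z
    have h := S_bounds (a + b * z)
    rw [Real.norm_eq_abs, abs_le]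
    constructor <;> linarith [h.1, h.2]
  have hFint : Integrable (fun z : ℝ => S (a + b * z) - 1) γ :=
    (integrable_const (1:ℝ)).mono' hFcont.aestronglyMeasurable (ae_of_all _ hFbd)
  have hFzint : Integrable (fun z : ℝ => (S (a + b * z) - 1) * z) γ := by
    refine gamma_integrable_id.norm.mono'
      ((hFcont.mul continuous_id).aestronglyMeasurable) (ae_of_all _ fun z => ?_)
    rw [norm_mul]
    calc ‖S (a + b * z) - 1‖ * ‖z‖ ≤ 1 * ‖z‖ :=
          mul_le_mul_of_nonneg_right (hFbd z) (norm_nonneg _)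
      _ = ‖z‖ := one_mul _
  -- pointwise rewriting of the integrand
  have hmv : ∀ p : ℝ × ℝ,
      (W *ᵥ fun j => (p.1 • v + p.2 • vperp) j) i = p.1 * B + p.2 * C := by
    intro p
    have hfun : (fun j => (p.1 • v + p.2 • vperp) j)
        = p.1 • (fun j => v j) + p.2 • (fun j => vperp j) := rfl
    rw [hfun, Matrix.mulVec_add, Matrix.mulVec_smul, Matrix.mulVec_smul]
    simp only [Pi.add_apply, Pi.smul_apply, smul_eq_mul, ← hB, ← hC]
  have hinner : ∀ p : ℝ × ℝ, σ' * ⟪v, p.1 • v + p.2 • vperp⟫ = b * p.1 := by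
    intro p
    rw [inner_add_right, real_inner_smul_right, real_inner_smul_right, horth,
      real_inner_self_eq_norm_sq, hb]
    ring
  have hintegrand : ∀ p : ℝ × ℝ,
      (S (a + σ' * ⟪v, p.1 • v + p.2 • vperp⟫) - 1) *
        (μt * A + σ' * (W *ᵥ fun j => (p.1 • v + p.2 • vperp) j) i)
      = (μt * A * (S (a + b * p.1) - 1)) * 1 +
          ((σ' * B * ((S (a + b * p.1) - 1) * p.1)) * 1 +
            (σ' * C * (S (a + b * p.1) - 1)) * p.2) := by
    intro p
    rw [hmv p, hinner p]
    ring
  have hγ2 : γ2 = γ.prod γ := rfl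
  rw [hγ2]
  have hI1 : Integrable
      (fun p : ℝ × ℝ => (μt * A * (S (a + b * p.1) - 1)) * 1) (γ.prod γ) :=
    (hFint.const_mul (μt * A)).mul_prod (integrable_const 1)
  have hI2 : Integrable
      (fun p : ℝ × ℝ => (σ' * B * ((S (a + b * p.1) - 1) * p.1)) * 1) (γ.prod γ) :=
    (hFzint.const_mul (σ' * B)).mul_prod (integrable_const 1)
  have hI3 : Integrable
      (fun p : ℝ × ℝ => (σ' * C * (S (a + b * p.1) - 1)) * p.2) (γ.prod γ) :=
    (hFint.const_mul (σ' * C)).mul_prod gamma_integrable_id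
  calc (∫ p : ℝ × ℝ,
          (S (a + σ' * ⟪v, p.1 • v + p.2 • vperp⟫) - 1) *
            (μt * A + σ' * (W *ᵥ fun j => (p.1 • v + p.2 • vperp) j) i) ∂(γ.prod γ))
      = ∫ p : ℝ × ℝ,
          ((μt * A * (S (a + b * p.1) - 1)) * 1 +
            ((σ' * B * ((S (a + b * p.1) - 1) * p.1)) * 1 +
              (σ' * C * (S (a + b * p.1) - 1)) * p.2)) ∂(γ.prod γ) :=
        integral_congr_ae (ae_of_all _ hintegrand)
    _ = (∫ p : ℝ × ℝ, (μt * A * (S (a + b * p.1) - 1)) * 1 ∂(γ.prod γ)) +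
          ((∫ p : ℝ × ℝ, (σ' * B * ((S (a + b * p.1) - 1) * p.1)) * 1 ∂(γ.prod γ)) +
            (∫ p : ℝ × ℝ, (σ' * C * (S (a + b * p.1) - 1)) * p.2 ∂(γ.prod γ))) := by
        have hI23 : Integrable (fun p : ℝ × ℝ =>
            (σ' * B * ((S (a + b * p.1) - 1) * p.1)) * 1 +
              (σ' * C * (S (a + b * p.1) - 1)) * p.2) (γ.prod γ) := hI2.add hI3
        rw [integral_add hI1 hI23, integral_add hI2 hI3]
    _ = (∫ z, μt * A * (S (a + b * z) - 1) ∂γ) * (∫ _, (1:ℝ) ∂γ) +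
          ((∫ z, σ' * B * ((S (a + b * z) - 1) * z) ∂γ) * (∫ _, (1:ℝ) ∂γ) +
            (∫ z, σ' * C * (S (a + b * z) - 1) ∂γ) * (∫ z, z ∂γ)) := by
        have e1 := integral_prod_mul (μ := γ) (ν := γ)
          (f := fun z => μt * A * (S (a + b * z) - 1)) (g := fun _ => (1:ℝ))
        have e2 := integral_prod_mul (μ := γ) (ν := γ)
          (f := fun z => σ' * B * ((S (a + b * z) - 1) * z)) (g := fun _ => (1:ℝ))
        have e3 := integral_prod_mul (μ := γ) (ν := γ)
          (f := fun z => σ' * C * (S (a + b * z) - 1)) (g := fun y => y)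
        rw [e1, e2, e3]
    _ = l₁ * A + l₂ * B := by
        rw [gamma_mean_zero, integral_const_mul, integral_const_mul, hl₁, hl₂]
        simp
        ring
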